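/- Let m be odd with m ≥ 5 and 1 ≤ l ≤ m-1, and let f(x) = x^m + x^{m-1} + ... + x^{l+1} + x^{l-1} + ... + x + 1 ∈ F_2[x] be a maximum weight polynomial. Suppose g(x) = x^a + x^b + 1 is a trinomial over F_2 with 0 < b < a ≤ 2m, and g(x) = f(x)·h(x) for some h(x) ∈ F_2[x]. Then the number N of nonzero coefficients of h equals 3 or 5. -/

import Mathlib

open Polynomial

def rowSum (l r t n : ℕ) : ZMod 2 :=
  (if n = t then 1 else 0) + (if n = l + t then 1 else 0) +
  (if n = l + 1 + t then 1 else 0) + (if n = r + t then 1 else 0)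

def lhsSum (a b l r n : ℕ) : ZMod 2 :=
  (if n = a + 1 then 1 else 0) + (if n = a then 1 else 0) +
  (if n = b + 1 then 1 else 0) + (if n = b then 1 else 0) +
  (if n = 1 then 1 else 0) + (if n = 0 then 1 else 0) +
  (if n = l then 1 else 0) + (if n = l + r then 1 else 0)

def fullCond (l a b r : ℕ) : Prop :=
  ∀ n, n < 2 * r →
    lhsSum a b l r n + rowSum l r ((a + (r - l)) % r) n +
      rowSum l r ((b + (r - l)) % r) n + rowSum l r ((r - l) % r) n = 1

instance instFC (l a b r : ℕ) : Decidable (fullCond l a b r) :=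
  Nat.decidableBallLT (2*r) _

instance I1 (l b : ℕ) : Decidable (∀ a < 19, 1 ≤ l → 1 ≤ b → b < a → ¬ fullCond l a b 10) :=
  Nat.decidableBallLT _ _
instance I2 (l : ℕ) : Decidable (∀ b < 18, ∀ a < 19, 1 ≤ l → 1 ≤ b → b < a → ¬ fullCond l a b 10) :=
  Nat.decidableBallLT _ _
instance I3 : Decidable (∀ l < 9, ∀ b < 18, ∀ a < 19, 1 ≤ l → 1 ≤ b → b < a → ¬ fullCond l a b 10) :=
  Nat.decidableBallLT _ _

set_option maxRecDepth 1000000 in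
theorem P9 : ∀ l < 9, ∀ b < 18, ∀ a < 19, 1 ≤ l → 1 ≤ b → b < a → ¬ fullCond l a b 10 := by
  decide

def distinct3 (l a b r : ℕ) : Prop :=
  (a + (r - l)) % r ≠ (b + (r - l)) % r ∧ (a + (r - l)) % r ≠ (r - l) % r ∧
    (b + (r - l)) % r ≠ (r - l) % r

instance instD3 (l a b r : ℕ) : Decidable (distinct3 l a b r) := by
  unfold distinct3; infer_instance

instance J1 (l b : ℕ) :
    Decidable (∀ a < 15, 1 ≤ l → 1 ≤ b → b < a → fullCond l a b 8 → distinct3 l a b 8) :=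
  Nat.decidableBallLT _ _
instance J2 (l : ℕ) :
    Decidable (∀ b < 14, ∀ a < 15, 1 ≤ l → 1 ≤ b → b < a → fullCond l a b 8 → distinct3 l a b 8) :=
  Nat.decidableBallLT _ _
instance J3 :
    Decidable (∀ l < 7, ∀ b < 14, ∀ a < 15, 1 ≤ l → 1 ≤ b → b < a → fullCond l a b 8 → distinct3 l a b 8) :=
  Nat.decidableBallLT _ _

set_option maxRecDepth 1000000 in
theorem P7 : ∀ l < 7, ∀ b < 14, ∀ a < 15, 1 ≤ l → 1 ≤ b → b < a → fullCond l a b 8 →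
    distinct3 l a b 8 := by
  decide

lemma coeff_geom (k n : ℕ) :
    (∑ i ∈ Finset.range k, (X:Polynomial (ZMod 2))^i).coeff n = if n < k then 1 else 0 := by
  rw [Polynomial.finset_sum_coeff]
  simp [Polynomial.coeff_X_pow]

lemma supp_geom (k : ℕ) :
    (∑ i ∈ Finset.range k, (X:Polynomial (ZMod 2))^i).support = Finset.range k := by
  ext n
  rw [Polynomial.mem_support_iff, coeff_geom]
  split_ifs with hh <;> simp [hh]

lemma csal (p q : Polynomial (ZMod 2)) :
    (p+q).support.card ≤ p.support.card + q.support.card :=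
  le_trans (Finset.card_le_card Polynomial.support_add) (Finset.card_union_le _ _)

lemma csX (e : ℕ) : ((X:Polynomial (ZMod 2))^e).support.card = 1 := by
  rw [Polynomial.support_X_pow e]
  simp

lemma TWO : (2 : Polynomial (ZMod 2)) = 0 := CharTwo.two_eq_zero

set_option maxHeartbeats 2000000 in
theorem maxweight_trinomial_factor_weight (m l : ℕ) (hm : Odd m) (hm5 : 5 ≤ m)
    (hl1 : 1 ≤ l) (hl2 : l ≤ m - 1)
    (f : Polynomial (ZMod 2))
    (hf : f = (∑ i ∈ Finset.range (m + 1), X ^ i) + X ^ l)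
    (a b : ℕ) (hb : 0 < b) (hba : b < a) (ha : a ≤ 2 * m)
    (g : Polynomial (ZMod 2)) (hg : g = X ^ a + X ^ b + 1)
    (h : Polynomial (ZMod 2)) (hgh : g = f * h) :
    h.support.card = 3 ∨ h.support.card = 5 := by
  have hlm : l < m := by omega
  set r : ℕ := m + 1 with hrdef
  have hr0 : 0 < r := by omega
  have hlr : l < r := by omega
  set J : Polynomial (ZMod 2) := ∑ i ∈ Finset.range r, X ^ i with hJdef
  have hf' : f = J + X ^ l := hf
  have ha0 : 0 < a := hb.trans hba
  -- basic nonvanishing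
  have hu : (X + 1 : Polynomial (ZMod 2)) ≠ 0 := by
    intro hc
    have := congrArg (fun p => Polynomial.coeff p 1) hc
    simp [Polynomial.coeff_one] at this
  have E1 : (X + 1) * J = X ^ r + 1 := by
    have h1 := geom_sum_mul (X : Polynomial (ZMod 2)) r
    rw [CharTwo.sub_eq_add, CharTwo.sub_eq_add] at h1
    rw [mul_comm]
    exact h1
  have E1l : (X + 1 : Polynomial (ZMod 2)) * (∑ i ∈ Finset.range l, X ^ i) = X ^ l + 1 := by
    have h1 := geom_sum_mul (X : Polynomial (ZMod 2)) l
    rw [CharTwo.sub_eq_add, CharTwo.sub_eq_add] at h1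
    rw [mul_comm]
    exact h1
  have E2 : (X + 1 : Polynomial (ZMod 2)) * (∑ i ∈ Finset.range (2*r), X ^ i) = X ^ (2*r) + 1 := by
    have h1 := geom_sum_mul (X : Polynomial (ZMod 2)) (2*r)
    rw [CharTwo.sub_eq_add, CharTwo.sub_eq_add] at h1
    rw [mul_comm]
    exact h1
  -- coefficients of g
  have hgc0 : g.coeff 0 = 1 := by
    rw [hg]
    simp [Polynomial.coeff_X_pow, Polynomial.coeff_one, ha0.ne, hb.ne, ha0.ne', hb.ne']
  have hgca : g.coeff a = 1 := by
    rw [hg]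
    simp [Polynomial.coeff_X_pow, Polynomial.coeff_one, hba.ne', ha0.ne, ha0.ne']
  have hgne : g ≠ 0 := by
    intro hc; rw [hc] at hgc0; simp at hgc0
  have hhne : h ≠ 0 := by
    intro hc; rw [hc, mul_zero] at hgh; exact hgne hgh
  -- coeff of f at m
  have hfcm : f.coeff m = 1 := by
    rw [hf', hJdef, Polynomial.coeff_add, coeff_geom, Polynomial.coeff_X_pow,
      if_pos (show m < r by omega), if_neg (show ¬ m = l by omega), add_zero]
  have hfne : f ≠ 0 := by
    intro hc; rw [hc] at hfcm; simp at hfcm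
  -- natDegrees
  have hga : g.natDegree = a := by
    apply le_antisymm
    · rw [hg]
      refine le_trans (Polynomial.natDegree_add_le _ _) ?_
      simp only [Polynomial.natDegree_one]
      refine le_trans (max_le_max (Polynomial.natDegree_add_le _ _) (le_refl 0)) ?_
      simp [Polynomial.natDegree_X_pow]
      omega
    · exact Polynomial.le_natDegree_of_ne_zero (by rw [hgca]; exact one_ne_zero)
  have hfm : f.natDegree = m := by
    apply le_antisymm
    · rw [hf']
      refine le_trans (Polynomial.natDegree_add_le _ _) ?_
      have hJ : J.natDegree ≤ m := by
        refine Polynomial.natDegree_sum_le_of_forall_le _ _ (fun i hi => ?_)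
        rw [Polynomial.natDegree_X_pow]
        simp only [Finset.mem_range] at hi
        omega
      simp [Polynomial.natDegree_X_pow, hJ]
      omega
    · exact Polynomial.le_natDegree_of_ne_zero (by rw [hfcm]; exact one_ne_zero)
  have hnd : h.natDegree = a - m := by
    have := Polynomial.natDegree_mul hfne hhne
    rw [← hgh, hga, hfm] at this
    omega
  have hndm : h.natDegree ≤ m := by omega
  -- eval at 1
  have hge : g.eval 1 = 1 := by
    rw [hg]; simp; decide
  have hfe : f.eval 1 = 1 := by
    rw [hf']
    have : J.eval 1 = ((r : ZMod 2)) := by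
      simp [hJdef, Polynomial.eval_finset_sum]
    rw [Polynomial.eval_add, this, Polynomial.eval_pow, Polynomial.eval_X]
    have : (r : ZMod 2) = 0 := by
      have : (2:ℕ) ∣ r := by
        obtain ⟨k, hk⟩ := hm; omega
      exact (ZMod.natCast_eq_zero_iff r 2).mpr this
    rw [this]; simp
  have hhe : h.eval 1 = 1 := by
    have := congrArg (Polynomial.eval 1) hgh
    rw [Polynomial.eval_mul, hge, hfe, one_mul] at this
    exact this.symm
  obtain ⟨w, hw⟩ : (X + 1 : Polynomial (ZMod 2)) ∣ (h + 1) := by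
    have h1 : (X - C 1 : Polynomial (ZMod 2)) ∣ (h + 1) := by
      apply Polynomial.dvd_iff_isRoot.mpr
      simp [Polynomial.IsRoot, hhe]
      decide
    simpa [CharTwo.sub_eq_add, map_one] using h1
  -- the three fold exponents
  set α : ℕ := (a + (r - l)) % r with hαdef
  set β : ℕ := (b + (r - l)) % r with hβdef
  set γ : ℕ := (r - l) % r with hγdef
  have hαr : α < r := Nat.mod_lt _ hr0
  have hβr : β < r := Nat.mod_lt _ hr0
  have hγr : γ < r := Nat.mod_lt _ hr0
  set A : Polynomial (ZMod 2) := X^α + X^β + X^γ with hAdef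
  -- divisibility tool
  have key : ∀ p : ℕ, (X^r + 1 : Polynomial (ZMod 2)) ∣ ((X^r)^p + 1) := by
    intro p
    have := sub_dvd_pow_sub_pow (X^r : Polynomial (ZMod 2)) 1 p
    simpa [CharTwo.sub_eq_add] using this
  have modlem : ∀ i j : ℕ, i % r = j % r → (X^r + 1 : Polynomial (ZMod 2)) ∣ (X^i + X^j) := by
    intro i j hij
    have ki : (X:Polynomial (ZMod 2))^i = (X^r)^(i/r) * X^(i%r) := by
      rw [← pow_mul, ← pow_add]
      rw [Nat.div_add_mod]
    have kj : (X:Polynomial (ZMod 2))^j = (X^r)^(j/r) * X^(j%r) := by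
      rw [← pow_mul, ← pow_add]
      rw [Nat.div_add_mod]
    have he : (X:Polynomial (ZMod 2))^i + X^j
        = X^(j%r) * ((((X^r)^(i/r)) + 1) + (((X^r)^(j/r)) + 1)) := by
      rw [ki, kj, hij]
      linear_combination (-(X:Polynomial (ZMod 2))^(j % r)) * TWO
    rw [he]
    exact Dvd.dvd.mul_left (dvd_add (key _) (key _)) _
  -- U divisibility
  have hU : (X^r + 1 : Polynomial (ZMod 2)) ∣ (X^l * h + g + J) := by
    have e : X^l * h + g + J = J * (h + 1) := by
      rw [hgh, hf']
      linear_combination (X^l * h) * TWO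
    exact ⟨w, by rw [e, hw, ← mul_assoc, mul_comm J (X+1), E1]⟩
  -- arithmetic identities
  have ar1 : (l + α) % r = a % r := by
    rw [hαdef, Nat.add_mod_mod, (by omega : l + (a + (r - l)) = a + r), Nat.add_mod_right]
  have ar2 : (l + β) % r = b % r := by
    rw [hβdef, Nat.add_mod_mod, (by omega : l + (b + (r - l)) = b + r), Nat.add_mod_right]
  have ar3 : (l + γ) % r = 0 % r := by
    rw [hγdef, Nat.add_mod_mod, (by omega : l + (r - l) = r), Nat.mod_self, Nat.zero_mod]
  have hU' : (X^r + 1 : Polynomial (ZMod 2)) ∣ (X^l * (J + A) + g + J) := by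
    have eq' : X^l * (J + A) + g + J
        = ((X^l * J + J) + ((X^(l+α) + X^a) + ((X^(l+β) + X^b) + (X^(l+γ) + X^0)))) := by
      rw [hg, hAdef]
      ring
    rw [eq']
    have d4 : (X^r + 1 : Polynomial (ZMod 2)) ∣ (X^l * J + J) := by
      refine ⟨∑ i ∈ Finset.range l, X^i, ?_⟩
      linear_combination (∑ i ∈ Finset.range l, (X:Polynomial (ZMod 2))^i) * E1 - J * E1l
    exact dvd_add d4 (dvd_add (modlem _ _ ar1) (dvd_add (modlem _ _ ar2) (modlem _ _ ar3)))
  -- h = J + A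
  have hhJA : h = J + A := by
    have h1 : (X^r + 1 : Polynomial (ZMod 2)) ∣ (X^l * (h + (J + A))) := by
      have e : X^l * (h + (J + A)) = (X^l * h + g + J) + (X^l * (J + A) + g + J) := by
        linear_combination (-(g + J)) * TWO
      rw [e]
      exact dvd_add hU hU'
    have h2 : (X^r + 1 : Polynomial (ZMod 2)) ∣ (h + (J + A)) := by
      have h3 := h1.mul_left (X^(r-l) : Polynomial (ZMod 2))
      have e2 : X^(r-l) * (X^l * (h + (J + A)))
          = (X^r + 1) * (h + (J + A)) + (h + (J + A)) := by
        rw [← mul_assoc, ← pow_add, (by omega : r - l + l = r)]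
        linear_combination (-(h + (J + A))) * TWO
      rw [e2] at h3
      exact (dvd_add_right (Dvd.intro _ rfl)).mp h3
    have hdegs : (h + (J + A)).natDegree ≤ m := by
      refine le_trans (Polynomial.natDegree_add_le _ _) ?_
      have hJd : J.natDegree ≤ m := by
        refine Polynomial.natDegree_sum_le_of_forall_le _ _ (fun i hi => ?_)
        rw [Polynomial.natDegree_X_pow]
        simp only [Finset.mem_range] at hi
        omega
      have hAd : A.natDegree ≤ m := by
        rw [hAdef]
        refine le_trans (Polynomial.natDegree_add_le _ _) ?_
        refine max_le (le_trans (Polynomial.natDegree_add_le _ _) ?_) ?_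
        · simp [Polynomial.natDegree_X_pow]; omega
        · simp [Polynomial.natDegree_X_pow]; omega
      have hJA : (J + A).natDegree ≤ m :=
        le_trans (Polynomial.natDegree_add_le _ _) (max_le hJd hAd)
      exact max_le hndm hJA
    have hzero : h + (J + A) = 0 := by
      refine Polynomial.eq_zero_of_dvd_of_degree_lt h2 ?_
      have hdX : (X^r + 1 : Polynomial (ZMod 2)).degree = r := by
        simpa using Polynomial.degree_X_pow_add_C hr0 (1 : ZMod 2)
      rw [hdX]
      calc (h + (J + A)).degree ≤ (m : WithBot ℕ) :=
            Polynomial.natDegree_le_iff_degree_le.mp hdegs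
        _ < (r : WithBot ℕ) := by exact_mod_cast (show m < r by omega)
    have := sub_eq_zero.mpr (rfl : J + A = J + A)
    rw [← CharTwo.sub_eq_add] at hzero
    exact sub_eq_zero.mp hzero
  -- the key product equation
  have KEY : (J + X^l) * (J + A) = X^a + X^b + 1 := by
    rw [← hf', ← hhJA, ← hgh, hg]
  -- the monomial identity
  have M : (∑ i ∈ Finset.range (2*r), X ^ i : Polynomial (ZMod 2))
      = X^(a+1) + X^a + X^(b+1) + X^b + X^1 + X^0 + X^l + X^(l+r)
        + (X^α + X^(l+α) + X^(l+1+α) + X^(r+α))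
        + (X^β + X^(l+β) + X^(l+1+β) + X^(r+β))
        + (X^γ + X^(l+γ) + X^(l+1+γ) + X^(r+γ)) := by
    apply mul_left_cancel₀ hu
    rw [E2]
    linear_combination (X+1)^2 * KEY
      - (2*(X^r+1) + ((X+1)*J - (X^r+1)) + (X+1)*(X^l + A)) * E1
      - (X^r + (X+1)*X^l*(1+X^r) + (X+1)*(1+X^l+X^l*X+X^r)*A) * TWO
  -- extract the coefficient conditions
  have FC : fullCond l a b r := by
    intro n hn
    have C := congrArg (fun p => Polynomial.coeff p n) M
    simp only [coeff_geom, Polynomial.coeff_add, Polynomial.coeff_X_pow] at C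
    rw [if_pos hn] at C
    unfold lhsSum rowSum
    rw [← hαdef, ← hβdef, ← hγdef]
    linear_combination C.symm
  -- weight bound: 2*r ≤ 20
  have CB : 2 * r ≤ 20 := by
    have hcard : (∑ i ∈ Finset.range (2*r), X ^ i : Polynomial (ZMod 2)).support.card = 2*r := by
      rw [supp_geom, Finset.card_range]
    rw [M] at hcard
    have hb20 : (X^(a+1) + X^a + X^(b+1) + X^b + X^1 + X^0 + X^l + X^(l+r)
        + (X^α + X^(l+α) + X^(l+1+α) + X^(r+α))
        + (X^β + X^(l+β) + X^(l+1+β) + X^(r+β))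
        + (X^γ + X^(l+γ) + X^(l+1+γ) + X^(r+γ)) : Polynomial (ZMod 2)).support.card ≤ 20 := by
      refine le_trans (csal _ _) ?_
      refine le_trans (add_le_add (csal _ _) (le_refl _)) ?_
      refine le_trans (add_le_add (add_le_add (csal _ _) (le_refl _)) (le_refl _)) ?_
      have g1 : (X^(a+1) + X^a + X^(b+1) + X^b + X^1 + X^0 + X^l + X^(l+r)
          : Polynomial (ZMod 2)).support.card ≤ 8 := by
        refine le_trans (csal _ _) ?_
        refine le_trans (add_le_add (csal _ _) (le_refl _)) ?_
        refine le_trans (add_le_add (add_le_add (csal _ _) (le_refl _)) (le_refl _)) ?_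
        refine le_trans (add_le_add (add_le_add (add_le_add (csal _ _) (le_refl _)) (le_refl _)) (le_refl _)) ?_
        refine le_trans (add_le_add (add_le_add (add_le_add (add_le_add (csal _ _) (le_refl _)) (le_refl _)) (le_refl _)) (le_refl _)) ?_
        refine le_trans (add_le_add (add_le_add (add_le_add (add_le_add (add_le_add (csal _ _) (le_refl _)) (le_refl _)) (le_refl _)) (le_refl _)) (le_refl _)) ?_
        refine le_trans (add_le_add (add_le_add (add_le_add (add_le_add (add_le_add (add_le_add (csal _ _) (le_refl _)) (le_refl _)) (le_refl _)) (le_refl _)) (le_refl _)) (le_refl _)) ?_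
        simp only [csX]; omega
      have g2 : ∀ t1 t2 t3 t4 : ℕ, (X^t1 + X^t2 + X^t3 + X^t4
          : Polynomial (ZMod 2)).support.card ≤ 4 := by
        intro t1 t2 t3 t4
        refine le_trans (csal _ _) ?_
        refine le_trans (add_le_add (csal _ _) (le_refl _)) ?_
        refine le_trans (add_le_add (add_le_add (csal _ _) (le_refl _)) (le_refl _)) ?_
        simp only [csX]; omega
      have := add_le_add (add_le_add (add_le_add g1 (g2 α (l+α) (l+1+α) (r+α)))
        (g2 β (l+β) (l+1+β) (r+β))) (g2 γ (l+γ) (l+1+γ) (r+γ))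
      omega
    omega
  -- support card computations
  have hcoeff : ∀ n, h.coeff n = (if n < r then 1 else 0)
      + ((if n = α then 1 else 0) + ((if n = β then 1 else 0) + (if n = γ then 1 else 0))) := by
    intro n
    rw [hhJA, hAdef, hJdef]
    simp only [Polynomial.coeff_add, coeff_geom, Polynomial.coeff_X_pow]
    ring
  have card_distinct : α ≠ β → α ≠ γ → β ≠ γ → h.support.card = m - 2 := by
    intro d1 d2 d3
    have hsupp : h.support = Finset.range r \ {α, β, γ} := by
      ext n
      rw [Polynomial.mem_support_iff, hcoeff n]
      simp only [Finset.mem_sdiff, Finset.mem_range, Finset.mem_insert, Finset.mem_singleton]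
      by_cases h1 : n = α <;> by_cases h2 : n = β <;> by_cases h3 : n = γ <;>
        simp [h1, h2, h3, d1, d2, d3, d1.symm, d2.symm, d3.symm, hαr, hβr, hγr] <;> try decide
    rw [hsupp]
    have hsub : ({α, β, γ} : Finset ℕ) ⊆ Finset.range r := by
      intro x hx
      simp only [Finset.mem_insert, Finset.mem_singleton] at hx
      rw [Finset.mem_range]
      rcases hx with rfl|rfl|rfl <;> omega
    have hc3 : ({α, β, γ} : Finset ℕ).card = 3 := by
      rw [Finset.card_insert_of_notMem (by simp [d1, d2]),
        Finset.card_insert_of_notMem (by simp [d3]), Finset.card_singleton]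
    rw [Finset.card_sdiff_of_subset hsub, Finset.card_range, hc3]
    omega
  have card_single : ∀ t : ℕ, t < r → h = J + X^t → h.support.card = m := by
    intro t ht hht
    have hco : ∀ n, h.coeff n = (if n < r then 1 else 0) + (if n = t then 1 else 0) := by
      intro n
      rw [hht, hJdef]
      simp only [Polynomial.coeff_add, coeff_geom, Polynomial.coeff_X_pow]
    have hsupp : h.support = Finset.range r \ {t} := by
      ext n
      rw [Polynomial.mem_support_iff, hco n]
      simp only [Finset.mem_sdiff, Finset.mem_range, Finset.mem_singleton]
      by_cases h1 : n = t <;> simp [h1, ht] <;> try decide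
    rw [hsupp, Finset.card_sdiff_of_subset (by simp [Finset.mem_range, ht]), Finset.card_range,
      Finset.card_singleton]
    omega
  -- m ∈ {5,7,9}
  have hm579 : m = 5 ∨ m = 7 ∨ m = 9 := by
    obtain ⟨k, hk⟩ := hm
    omega
  rcases hm579 with h5 | h7 | h9
  · -- m = 5
    subst h5
    by_cases d1 : α = β
    · right
      refine card_single γ hγr ?_
      rw [hhJA, hAdef, d1, CharTwo.add_self_eq_zero, zero_add]
    · by_cases d2 : α = γ
      · right
        refine card_single β hβr ?_
        rw [hhJA, hAdef, d2, add_comm ((X:Polynomial (ZMod 2))^γ) ((X:Polynomial (ZMod 2))^β),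
          add_assoc, CharTwo.add_self_eq_zero, add_zero]
      · by_cases d3 : β = γ
        · right
          refine card_single α hαr ?_
          rw [hhJA, hAdef, d3, add_assoc, CharTwo.add_self_eq_zero, add_zero]
        · left
          rw [card_distinct d1 d2 d3]
  · -- m = 7
    subst h7
    have hd3 : distinct3 l a b 8 :=
      P7 l (by omega) b (by omega) a (by omega) hl1 hb hba FC
    obtain ⟨d1, d2, d3⟩ := hd3
    right
    rw [card_distinct d1 d2 d3]
  · -- m = 9
    subst h9
    exact absurd FC (P9 l (by omega) b (by omega) a (by omega) hl1 hb hba)
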